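/- arXiv:1105.1874 — 3 statements merged into one kernel-verified Lean document; each statement's English description precedes it below -/
import Mathlib

section
/- Let X be a bounded open subset of ℂⁿ and U ⊂ X open with closure(U) ⊂ X compact. Then there exists k < 1 such that for all a ∈ U and v ∈ ℂⁿ, E_X(a,v) ≤ k · E_U(a,v), where E denotes the infinitesimal Carathéodory metric. -/
open Metric Set Filter Topology
open Complex

/-- Infinitesimal Carathéodory metric of a set `Ω` in a complex normed space:
`E_Ω(x,v) = sup {|Dφ(x)·v| : φ : Ω → Δ holomorphic}`. -/
noncomputable def caraMetric {E : Type*} [NormedAddCommGroup E] [NormedSpace ℂ E]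
    (Ω : Set E) (x v : E) : ℝ :=
  sSup {r : ℝ | ∃ φ : E → ℂ, DifferentiableOn ℂ φ Ω ∧ MapsTo φ Ω (ball 0 1) ∧
    r = ‖fderivWithin ℂ φ Ω x v‖}

lemma nsq (z : ℂ) : ‖z‖^2 = z.re^2 + z.im^2 := by
  rw [Complex.sq_norm, Complex.normSq_apply]; ring

noncomputable def moeb (α w : ℂ) : ℂ := (w - α) / (1 - (starRingEnd ℂ) α * w)

lemma moeb_denom_ne {α w : ℂ} (hα : ‖α‖ < 1) (hw : ‖w‖ < 1) :
    1 - (starRingEnd ℂ) α * w ≠ 0 := by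
  intro h
  have h2 : ‖(starRingEnd ℂ) α * w‖ < 1 := by
    rw [norm_mul, RCLike.norm_conj]
    nlinarith [norm_nonneg α, norm_nonneg w]
  rw [sub_eq_zero] at h
  rw [← h] at h2
  simp at h2

lemma sq_norm_ineq (α w : ℂ) :
    ‖w - α‖ ^ 2 + (1 - ‖α‖^2) * (1 - ‖w‖^2) = ‖1 - (starRingEnd ℂ) α * w‖ ^ 2 := by
  simp only [nsq, Complex.sub_re, Complex.sub_im, Complex.mul_re, Complex.mul_im,
    Complex.one_re, Complex.one_im, Complex.conj_re, Complex.conj_im]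
  ring

lemma norm_moeb_lt_one {α w : ℂ} (hα : ‖α‖ < 1) (hw : ‖w‖ < 1) :
    ‖moeb α w‖ < 1 := by
  rw [moeb, norm_div, div_lt_one (norm_pos_iff.2 (moeb_denom_ne hα hw))]
  have h := sq_norm_ineq α w
  have hpos : 0 < (1 - ‖α‖^2) * (1 - ‖w‖^2) := by
    apply mul_pos <;> nlinarith [norm_nonneg α, norm_nonneg w]
  exact lt_of_pow_lt_pow_left₀ 2 (norm_nonneg _) (by linarith)


lemma real_key {p q x t s : ℝ} (hp : 0 ≤ p) (hq : 0 ≤ q) (hpt : p ≤ t) (hqs : q ≤ s)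
    (ht : t < 1) (hs : s < 1) (hx : x ≤ p*q) (hA : 0 ≤ p^2+q^2+2*x) :
    (p^2+q^2+2*x)*(1+t*s)^2 ≤ (t+s)^2*(1+2*x+p^2*q^2) := by
  have ht0 : 0 ≤ t := le_trans hp hpt
  have hs0 : 0 ≤ s := le_trans hq hqs
  have step1 : (p^2+q^2+2*x)*(1+p*q)^2 ≤ (p+q)^2*(1+2*x+p^2*q^2) := by
    nlinarith [mul_nonneg (mul_nonneg (sub_nonneg.2 hx) (by nlinarith : (0:ℝ) ≤ 1-p^2))
      (by nlinarith : (0:ℝ) ≤ 1-q^2)]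
  have step2 : (p+q)^2*(1+t*s)^2 ≤ (t+s)^2*(1+p*q)^2 := by
    have h : (p+q)*(1+t*s) ≤ (t+s)*(1+p*q) := by
      nlinarith [mul_nonneg (sub_nonneg.2 hpt) (by nlinarith : (0:ℝ) ≤ 1 - q*s),
        mul_nonneg (sub_nonneg.2 hqs) (by nlinarith : (0:ℝ) ≤ 1 - p*t)]
    have h1 : 0 ≤ (p+q)*(1+t*s) := by positivity
    nlinarith [h, h1]
  have hBx : 0 ≤ 1+2*x+p^2*q^2 := by nlinarith [sq_nonneg (1-p*q), sq_nonneg (p*q+x), sq_nonneg (p*q - x), mul_nonneg hp hq]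
  have hpq : (0:ℝ) < (1+p*q)^2 := by positivity
  have c1 : (p^2+q^2+2*x)*(1+p*q)^2*(1+t*s)^2 ≤ (p+q)^2*(1+2*x+p^2*q^2)*(1+t*s)^2 :=
    mul_le_mul_of_nonneg_right step1 (by positivity)
  have c2 : (p+q)^2*(1+t*s)^2*(1+2*x+p^2*q^2) ≤ (t+s)^2*(1+p*q)^2*(1+2*x+p^2*q^2) :=
    mul_le_mul_of_nonneg_right step2 hBx
  have := le_trans (by linarith [c1] : (p^2+q^2+2*x)*(1+t*s)^2*(1+p*q)^2 ≤ (p+q)^2*(1+t*s)^2*(1+2*x+p^2*q^2)) c2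
  have := le_of_mul_le_mul_right (by linarith : (p^2+q^2+2*x)*(1+t*s)^2*(1+p*q)^2 ≤ (t+s)^2*(1+2*x+p^2*q^2)*(1+p*q)^2) hpq
  linarith


lemma norm_one_sub_conj_mul_self (α : ℂ) (h : ‖α‖ < 1) :
    ‖1 - (starRingEnd ℂ) α * α‖ = 1 - ‖α‖^2 := by
  have h2 : (starRingEnd ℂ) α * α = ((‖α‖^2 : ℝ) : ℂ) := by
    rw [mul_comm, Complex.mul_conj, Complex.normSq_eq_norm_sq]
  rw [h2, ← Complex.ofReal_one, ← Complex.ofReal_sub, Complex.norm_real, Real.norm_eq_abs]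
  exact abs_of_nonneg (by nlinarith [norm_nonneg α])

-- Lemma C
set_option maxHeartbeats 1000000 in
lemma norm_le_of_moeb {α w : ℂ} {s t : ℝ} (ht : t < 1) (hs : s < 1)
    (hαt : ‖α‖ ≤ t) (hw : ‖w‖ < 1) (hm : ‖moeb α w‖ ≤ s) :
    ‖w‖ ≤ (t + s)/(1 + t*s) := by
  have hα1 : ‖α‖ < 1 := lt_of_le_of_lt hαt ht
  have ht0 : 0 ≤ t := le_trans (norm_nonneg _) hαt
  have hs0 : 0 ≤ s := le_trans (norm_nonneg _) hm
  set u := moeb α w with hu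
  have hD := moeb_denom_ne hα1 hw
  have hid : u + α = w * (1 + (starRingEnd ℂ) α * u) := by
    have hud : u * (1 - (starRingEnd ℂ) α * w) = w - α := by
      rw [hu, moeb]; exact div_mul_cancel₀ _ hD
    linear_combination hud
  have hone : (1 + (starRingEnd ℂ) α * u) * (1 - (starRingEnd ℂ) α * w)
      = 1 - (starRingEnd ℂ) α * α := by
    rw [hu, moeb]; field_simp; ring
  have hBne : 1 + (starRingEnd ℂ) α * u ≠ 0 := by
    intro h0
    have : (0:ℂ) = 1 - (starRingEnd ℂ) α * α := by rw [← hone, h0, zero_mul]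
    have h3 := norm_one_sub_conj_mul_self α hα1
    rw [← this] at h3
    simp only [norm_zero] at h3
    nlinarith [norm_nonneg α]
  have hBpos : 0 < ‖1 + (starRingEnd ℂ) α * u‖ := norm_pos_iff.2 hBne
  have hA : ‖u + α‖ = ‖w‖ * ‖1 + (starRingEnd ℂ) α * u‖ := by rw [hid, norm_mul]
  set p := ‖α‖
  set q := ‖u‖
  set x := α.re * u.re + α.im * u.im with hxdef
  have hp2 : p^2 = α.re^2 + α.im^2 := nsq α
  have hq2 : q^2 = u.re^2 + u.im^2 := nsq u
  have hA2 : ‖u + α‖^2 = p^2 + q^2 + 2*x := by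
    rw [nsq]; simp [Complex.add_re, Complex.add_im, hp2, hq2, hxdef]; ring
  have hB2 : ‖1 + (starRingEnd ℂ) α * u‖^2 = 1 + 2*x + p^2*q^2 := by
    rw [nsq]
    simp [Complex.add_re, Complex.add_im, Complex.mul_re, Complex.mul_im]
    rw [hp2, hq2, hxdef]
    ring
  have hx : x ≤ p*q := by
    have hlag : x^2 + (α.re * u.im - α.im * u.re)^2 = p^2*q^2 := by
      rw [hp2, hq2, hxdef]; ring
    nlinarith [sq_nonneg (α.re * u.im - α.im * u.re), mul_nonneg (norm_nonneg α) (norm_nonneg u),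
      sq_nonneg (x - p*q), sq_nonneg (x + p*q)]
  have hkey := real_key (norm_nonneg α) (norm_nonneg u) hαt hm ht hs hx
    (by rw [← hA2]; positivity)
  rw [← hA2, ← hB2] at hkey
  have e : ‖u + α‖^2 = ‖w‖^2 * ‖1 + (starRingEnd ℂ) α * u‖^2 := by rw [hA]; ring
  rw [e] at hkey
  have h4 : (‖w‖^2*(1+t*s)^2) * ‖1 + (starRingEnd ℂ) α * u‖^2
      ≤ (t+s)^2 * ‖1 + (starRingEnd ℂ) α * u‖^2 := by
    calc (‖w‖^2*(1+t*s)^2) * ‖1 + (starRingEnd ℂ) α * u‖^2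
        = ‖w‖^2 * ‖1 + (starRingEnd ℂ) α * u‖^2 * (1+t*s)^2 := by ring
      _ ≤ (t+s)^2 * ‖1 + (starRingEnd ℂ) α * u‖^2 := hkey
  have h5 := le_of_mul_le_mul_right h4 (pow_pos hBpos 2)
  have hden : (0:ℝ) < 1 + t*s := by nlinarith
  rw [le_div_iff₀ hden]
  nlinarith [h5, mul_nonneg (norm_nonneg w) (le_of_lt hden),
    sq_nonneg (‖w‖*(1+t*s) - (t+s)), sq_nonneg (‖w‖*(1+t*s) + (t+s))]

-- derivative lemma
lemma hasDerivAt_moeb (α : ℂ) {w : ℂ} (hd : 1 - (starRingEnd ℂ) α * w ≠ 0) :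
    HasDerivAt (moeb α) ((1 - (starRingEnd ℂ) α * α) / (1 - (starRingEnd ℂ) α * w)^2) w := by
  have h1 : HasDerivAt (fun z : ℂ => z - α) 1 w := (hasDerivAt_id w).sub_const α
  have h2 : HasDerivAt (fun z : ℂ => 1 - (starRingEnd ℂ) α * z) (-((starRingEnd ℂ) α)) w := by
    simpa using ((hasDerivAt_id w).const_mul ((starRingEnd ℂ) α)).const_sub 1
  have h3 := h1.div h2 hd
  refine HasDerivAt.congr_deriv (f := moeb α) h3 ?_
  congr 1
  ring


noncomputable def tseq : ℕ → ℝ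
  | 0 => 0
  | k+1 => (tseq k + 2/3)/(1 + tseq k * (2/3))

lemma tseq_nonneg : ∀ k, 0 ≤ tseq k := by
  intro k; induction k with
  | zero => simp [tseq]
  | succ k ih => rw [tseq]; positivity

lemma tseq_lt_one : ∀ k, tseq k < 1 := by
  intro k; induction k with
  | zero => norm_num [tseq]
  | succ k ih =>
    rw [tseq, div_lt_one (by nlinarith [tseq_nonneg k])]
    nlinarith [tseq_nonneg k]

lemma tseq_mono : Monotone tseq := by
  apply monotone_nat_of_le_succ
  intro k
  rw [tseq, le_div_iff₀ (by nlinarith [tseq_nonneg k])]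
  nlinarith [tseq_nonneg k, tseq_lt_one k]

lemma step_lemma {n : ℕ} {ψ : (Fin n → ℂ) → ℂ} {x w z : Fin n → ℂ} {δ t : ℝ}
    (hd : DifferentiableOn ℂ ψ (ball x δ)) (hm : MapsTo ψ (ball x δ) (ball 0 1))
    (hw : w ∈ ball x (δ/4)) (hz : z ∈ ball x (δ/4))
    (ht : t < 1) (hψw : ‖ψ w‖ ≤ t) :
    ‖ψ z‖ ≤ (t + 2/3)/(1 + t * (2/3)) := by
  have hδ : 0 < δ := by
    have := mem_ball.1 hw
    have := dist_nonneg (x := w) (y := x)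
    linarith
  set c : ℂ → (Fin n → ℂ) := fun lam => w + lam • (z - w) with hc
  have hzw : ‖z - w‖ < δ/2 := by
    have h1 : dist z x < δ/4 := mem_ball.1 hz
    have h2 : dist w x < δ/4 := mem_ball.1 hw
    calc ‖z - w‖ = dist z w := (dist_eq_norm z w).symm
      _ ≤ dist z x + dist x w := dist_triangle z x w
      _ < δ/4 + δ/4 := by rw [dist_comm x w]; linarith
      _ = δ/2 := by ring
  have hcurve : ∀ lam : ℂ, lam ∈ ball (0:ℂ) (3/2) → c lam ∈ ball x δ := by
    intro lam hlam
    rw [mem_ball, dist_eq_norm]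
    have hlamn : ‖lam‖ < 3/2 := by simpa [mem_ball, dist_eq_norm] using hlam
    calc ‖c lam - x‖ = ‖(w - x) + lam • (z - w)‖ := by rw [hc]; ring_nf
      _ ≤ ‖w - x‖ + ‖lam • (z - w)‖ := norm_add_le _ _
      _ = ‖w - x‖ + ‖lam‖ * ‖z - w‖ := by rw [norm_smul]
      _ < δ/4 + (3/2) * (δ/2) := by
          have h2 : ‖w - x‖ < δ/4 := by rw [← dist_eq_norm]; exact mem_ball.1 hw
          have h3 : ‖lam‖ * ‖z - w‖ ≤ (3/2) * ‖z - w‖ :=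
            mul_le_mul_of_nonneg_right (le_of_lt hlamn) (norm_nonneg _)
          have h4 : (3/2 : ℝ) * ‖z - w‖ < (3/2) * (δ/2) := by
            apply mul_lt_mul_of_pos_left hzw; norm_num
          linarith
      _ = δ := by ring
  have hcd : ∀ lam : ℂ, DifferentiableAt ℂ c lam := by
    intro lam
    apply DifferentiableAt.const_add
    exact (differentiableAt_fun_id).smul_const (z - w)
  have hψw1 : ‖ψ w‖ < 1 := by
    have := hm (mem_ball.2 (lt_of_lt_of_le (mem_ball.1 hw) (by linarith)))
    simpa [mem_ball, dist_eq_norm] using this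
  set h : ℂ → ℂ := fun lam => moeb (ψ w) (ψ (c lam)) with hh
  have hval : ∀ lam : ℂ, lam ∈ ball (0:ℂ) (3/2) → ‖ψ (c lam)‖ < 1 := by
    intro lam hlam
    have := hm (hcurve lam hlam)
    simpa [mem_ball, dist_eq_norm] using this
  have hhd : DifferentiableOn ℂ h (ball (0:ℂ) (3/2)) := by
    intro lam hlam
    apply DifferentiableAt.differentiableWithinAt
    have hgd : DifferentiableAt ℂ (fun l => ψ (c l)) lam :=
      (hd.differentiableAt (isOpen_ball.mem_nhds (hcurve lam hlam))).comp lam (hcd lam)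
    exact ((hasDerivAt_moeb (ψ w) (moeb_denom_ne hψw1 (hval lam hlam))).differentiableAt).comp
      lam hgd
  have hc0 : c 0 = w := by simp [hc]
  have hc1 : c 1 = z := by simp [hc]
  have hh0 : h 0 = 0 := by
    rw [hh]; simp only [hc0]
    rw [moeb, sub_self, zero_div]
  have hmaps : MapsTo h (ball (0:ℂ) (3/2)) (ball (h 0) 1) := by
    intro lam hlam
    rw [hh0, mem_ball, dist_eq_norm, sub_zero]
    exact norm_moeb_lt_one hψw1 (hval lam hlam)
  have h1mem : (1:ℂ) ∈ ball (0:ℂ) (3/2) := by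
    rw [mem_ball, dist_eq_norm, sub_zero]; norm_num
  have hSch := Complex.dist_le_div_mul_dist_of_mapsTo_ball hhd (hmaps.mono_right ball_subset_closedBall) h1mem
  rw [hh0, dist_zero_right, dist_zero_right] at hSch
  have hSch2 : ‖moeb (ψ w) (ψ z)‖ ≤ 2/3 := by
    have h2 : ‖h 1‖ ≤ 1 / (3/2) * ‖(1:ℂ)‖ := hSch
    have h3 : h 1 = moeb (ψ w) (ψ z) := by rw [hh]; simp only [hc1]
    rw [h3] at h2
    simpa using h2
  exact norm_le_of_moeb ht (by norm_num) hψw (by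
    have := hval 1 h1mem; rwa [hc1] at this) hSch2


lemma caraSet_bddAbove {n : ℕ} {Ω : Set (Fin n → ℂ)} (hΩ : IsOpen Ω) {a : Fin n → ℂ}
    (ha : a ∈ Ω) (v : Fin n → ℂ) :
    BddAbove {r : ℝ | ∃ φ : (Fin n → ℂ) → ℂ, DifferentiableOn ℂ φ Ω ∧ MapsTo φ Ω (ball 0 1) ∧
      r = ‖fderivWithin ℂ φ Ω a v‖} := by
  obtain ⟨ε, hε, hball⟩ := Metric.isOpen_iff.1 hΩ a ha
  refine ⟨2 * (‖v‖ + 1) / ε, ?_⟩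
  rintro r ⟨φ, hφd, hφm, rfl⟩
  rw [fderivWithin_of_isOpen hΩ ha]
  by_cases hv : v = 0
  · subst hv
    rw [(fderiv ℂ φ a).map_zero, norm_zero]
    positivity
  · have hvn : 0 < ‖v‖ := norm_pos_iff.2 hv
    set R : ℝ := ε / ‖v‖ with hR
    have hRpos : 0 < R := by positivity
    set g : ℂ → ℂ := fun lam => φ (a + lam • v) with hg
    have hcurve : ∀ lam : ℂ, lam ∈ ball (0:ℂ) R → a + lam • v ∈ Ω := by
      intro lam hlam
      apply hball
      rw [mem_ball, dist_eq_norm]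
      have : ‖a + lam • v - a‖ = ‖lam‖ * ‖v‖ := by
        rw [add_sub_cancel_left, norm_smul]
      rw [this]
      have hlamn : ‖lam‖ < R := by simpa [mem_ball, dist_eq_norm] using hlam
      calc ‖lam‖ * ‖v‖ < R * ‖v‖ := by exact mul_lt_mul_of_pos_right hlamn hvn
        _ = ε := by rw [hR]; field_simp
    have hφat : ∀ lam : ℂ, lam ∈ ball (0:ℂ) R → DifferentiableAt ℂ φ (a + lam • v) := by
      intro lam hlam
      exact hφd.differentiableAt (hΩ.mem_nhds (hcurve lam hlam))
    have hgd : DifferentiableOn ℂ g (ball (0:ℂ) R) := by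
      intro lam hlam
      apply DifferentiableAt.differentiableWithinAt
      exact DifferentiableAt.comp lam (hφat lam hlam)
        ((differentiableAt_fun_id.smul_const v).const_add a)
    have hgm : MapsTo g (ball (0:ℂ) R) (ball (g 0) 2) := by
      intro lam hlam
      rw [mem_ball, dist_eq_norm]
      have h1 : ‖g lam‖ < 1 := by
        have := hφm (hcurve lam hlam)
        simpa [hg, mem_ball, dist_eq_norm] using this
      have h2 : ‖g 0‖ < 1 := by
        have := hφm (hcurve 0 (mem_ball_self hRpos))
        simpa [hg, mem_ball, dist_eq_norm] using this
      calc ‖g lam - g 0‖ ≤ ‖g lam‖ + ‖g 0‖ := norm_sub_le _ _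
        _ < 2 := by linarith
    have hSch := Complex.norm_deriv_le_div_of_mapsTo_ball hgd (hgm.mono_right ball_subset_closedBall) hRpos
    have hda : HasFDerivAt φ (fderiv ℂ φ a) a :=
      (hφd.differentiableAt (hΩ.mem_nhds ha)).hasFDerivAt
    have hcur : HasDerivAt (fun lam : ℂ => a + lam • v) v 0 := by
      simpa using ((hasDerivAt_id (0:ℂ)).smul_const v).const_add a
    have hda' : HasFDerivAt φ (fderiv ℂ φ a) ((fun lam : ℂ => a + lam • v) 0) := by
      simpa using hda
    have hgder : HasDerivAt g ((fderiv ℂ φ a) v) 0 := hda'.comp_hasDerivAt 0 hcur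
    rw [hgder.deriv] at hSch
    calc ‖(fderiv ℂ φ a) v‖ ≤ 2 / R := hSch
      _ = 2 * ‖v‖ / ε := by rw [hR]; field_simp
      _ ≤ 2 * (‖v‖ + 1) / ε := by
        gcongr
        linarith


set_option maxHeartbeats 1000000 in
/-- Let `X` be a bounded open subset of `ℂⁿ` and `U ⊂ X` open with `closure U ⊆ X` compact.
Then there exists `k < 1` such that `E_X(a,v) ≤ k · E_U(a,v)` for all `a ∈ U`, `v ∈ ℂⁿ`. -/
theorem caratheodory_metric_contraction {n : ℕ} (X U : Set (Fin n → ℂ))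
    (hXo : IsOpen X) (hXb : Bornology.IsBounded X)
    (hUo : IsOpen U) (hUX : closure U ⊆ X) (hUc : IsCompact (closure U)) :
    ∃ k : ℝ, k < 1 ∧ ∀ a ∈ U, ∀ v : Fin n → ℂ,
      caraMetric X a v ≤ k * caraMetric U a v := by
  classical
  obtain ⟨δ, hδpos, hthick⟩ := hUc.exists_thickening_subset_open hXo hUX
  have hball : ∀ z ∈ closure U, ball z δ ⊆ X := fun z hz =>
    le_trans (ball_subset_thickening hz δ) hthick
  obtain ⟨t, hts, hcov⟩ := hUc.elim_nhds_subcover (fun x => ball x (δ/4))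
    (fun x _ => ball_mem_nhds x (by positivity))
  set N := t.card with hN
  set T := tseq (N + 2) with hT
  set r := (1 + T)/2 with hr
  have hT0 : 0 ≤ T := tseq_nonneg _
  have hT1 : T < 1 := tseq_lt_one _
  have hr1 : r < 1 := by rw [hr]; linarith
  have hr0 : 0 < r := by rw [hr]; linarith
  have hTr : T < r := by rw [hr]; linarith
  refine ⟨r, hr1, ?_⟩
  intro a ha v
  have haK : a ∈ closure U := subset_closure ha
  have haX : a ∈ X := hUX haK
  have hbdd := caraSet_bddAbove hUo ha v
  -- caraMetric U a v is nonnegative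
  have hEU0 : 0 ≤ caraMetric U a v := by
    apply le_csSup hbdd
    refine ⟨fun _ => 0, differentiableOn_const 0, fun z hz => by simp, ?_⟩
    rw [fderivWithin_of_isOpen hUo ha, fderiv_fun_const]
    simp
  apply Real.sSup_le _ (mul_nonneg hr0.le hEU0)
  rintro e ⟨φ, hφd, hφm, rfl⟩
  rw [fderivWithin_of_isOpen hXo haX]
  -- normalize φ
  set α := φ a with hα
  have hαn : ‖α‖ < 1 := by
    have := hφm haX
    simpa [mem_ball, dist_eq_norm] using this
  set ψ : (Fin n → ℂ) → ℂ := fun z => moeb α (φ z) with hψ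
  have hφz : ∀ z ∈ X, ‖φ z‖ < 1 := by
    intro z hz
    have := hφm hz
    simpa [mem_ball, dist_eq_norm] using this
  have hψd : ∀ z ∈ X, DifferentiableAt ℂ ψ z := by
    intro z hz
    have h1 : DifferentiableAt ℂ φ z := hφd.differentiableAt (hXo.mem_nhds hz)
    exact ((hasDerivAt_moeb α (moeb_denom_ne hαn (hφz z hz))).differentiableAt).comp z h1
  have hψm : ∀ z ∈ X, ‖ψ z‖ < 1 := fun z hz => norm_moeb_lt_one hαn (hφz z hz)
  have hψa : ψ a = 0 := by rw [hψ]; simp [moeb, hα]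
  -- pick the ball containing a
  obtain ⟨i₀, hi₀t, hai₀⟩ : ∃ i₀ ∈ t, a ∈ ball i₀ (δ/4) := by
    simpa using hcov haK
  -- the combinatorial saturation
  set B : (Fin n → ℂ) → Set (Fin n → ℂ) := fun y => ball y (δ/4) with hB
  set F : Finset (Fin n → ℂ) → Finset (Fin n → ℂ) :=
    fun s => t.filter (fun y => y ∈ s ∨ ∃ x ∈ s, (B x ∩ B y).Nonempty) with hF
  set S : ℕ → Finset (Fin n → ℂ) := fun k => F^[k] {i₀} with hS
  have hSsucc : ∀ k, S (k+1) = F (S k) := by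
    intro k; rw [hS]; simp [Function.iterate_succ_apply']
  have hSsub : ∀ k, S k ⊆ t := by
    intro k; induction k with
    | zero => intro y hy; simp only [hS, Function.iterate_zero, id_eq, Finset.mem_singleton] at hy
              rw [hy]; exact hi₀t
    | succ k ih => rw [hSsucc]; exact Finset.filter_subset _ _
  have hSmono : ∀ k, S k ⊆ S (k+1) := by
    intro k y hy
    rw [hSsucc, hF]
    exact Finset.mem_filter.2 ⟨hSsub k hy, Or.inl hy⟩
  have hSi₀ : ∀ k, i₀ ∈ S k := by
    intro k; induction k with
    | zero => simp [hS]
    | succ k ih => exact hSmono k ih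
  -- differentiability of ψ on each big ball
  have hballX : ∀ j ∈ t, ball j δ ⊆ X := fun j hj => hball j (hts j hj)
  have hψbd : ∀ j ∈ t, DifferentiableOn ℂ ψ (ball j δ) := by
    intro j hj z hz
    exact (hψd z (hballX j hj hz)).differentiableWithinAt
  have hψbm : ∀ j ∈ t, MapsTo ψ (ball j δ) (ball 0 1) := by
    intro j hj z hz
    rw [mem_ball, dist_eq_norm, sub_zero]
    exact hψm z (hballX j hj hz)
  -- the chain bound
  have hbound : ∀ k, ∀ j ∈ S k, ∀ z ∈ B j, ‖ψ z‖ ≤ tseq (k+1) := by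
    intro k; induction k with
    | zero =>
      intro j hj z hz
      have hj0 : j = i₀ := by simpa [hS] using hj
      subst hj0
      have := step_lemma (hψbd j hi₀t) (hψbm j hi₀t) hai₀ hz (tseq_lt_one 0)
        (by rw [hψa, tseq]; simp [tseq])
      simpa [tseq] using this
    | succ k ih =>
      intro j hj z hz
      rw [hSsucc, hF, Finset.mem_filter] at hj
      obtain ⟨hjt, hj2⟩ := hj
      rcases hj2 with hj2 | ⟨i, hiS, w, hwB⟩
      · exact le_trans (ih j hj2 z hz) (tseq_mono (by omega))
      · have hψw : ‖ψ w‖ ≤ tseq (k+1) := ih i hiS w hwB.1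
        have := step_lemma (hψbd j hjt) (hψbm j hjt) hwB.2 hz (tseq_lt_one (k+1)) hψw
        simpa [tseq] using this
  -- saturation
  have hsat : ∃ k ≤ N, F (S k) = S k := by
    by_contra hcon
    push_neg at hcon
    have hcard : ∀ k, k ≤ N + 1 → k + 1 ≤ (S k).card := by
      intro k; induction k with
      | zero => intro _; simp [hS]
      | succ k ih =>
        intro hk
        have h1 := ih (by omega)
        have hne : S k ≠ S (k+1) := by
          rw [hSsucc]; exact fun h => hcon k (by omega) (h.symm)
        have hss : S k ⊂ S (k+1) := lt_of_le_of_ne (hSmono k) hne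
        have := Finset.card_lt_card hss
        omega
    have h1 := hcard (N+1) (le_refl _)
    have h2 : (S (N+1)).card ≤ N := by
      rw [hN]; exact Finset.card_le_card (hSsub (N+1))
    omega
  obtain ⟨k₀, hk₀N, hfix⟩ := hsat
  -- the open set W
  set W : Set (Fin n → ℂ) := ⋃ x ∈ S k₀, B x with hW
  have hWo : IsOpen W := isOpen_biUnion fun _ _ => isOpen_ball
  have haW : a ∈ W := mem_biUnion (hSi₀ k₀) hai₀
  have hWX : W ⊆ X := by
    intro z hz
    obtain ⟨j, hj, hzj⟩ := mem_iUnion₂.1 hz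
    exact hballX j (hSsub k₀ hj) (lt_of_lt_of_le (mem_ball.1 hzj) (by linarith) : z ∈ ball j δ)
  have hWbound : ∀ z ∈ W, ‖ψ z‖ ≤ T := by
    intro z hz
    obtain ⟨j, hj, hzj⟩ := mem_iUnion₂.1 hz
    exact le_trans (hbound k₀ j hj z hzj) (tseq_mono (by omega))
  -- U \ W is open
  have hUWeq : U \ W = U ∩ ⋃ x ∈ t.filter (fun y => y ∉ S k₀), B x := by
    ext z
    constructor
    · rintro ⟨hzU, hzW⟩
      refine ⟨hzU, ?_⟩
      obtain ⟨j, hjt, hzj⟩ : ∃ j ∈ t, z ∈ ball j (δ/4) := by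
        simpa using hcov (subset_closure hzU)
      have hjS : j ∉ S k₀ := by
        intro hjS
        exact hzW (mem_biUnion hjS hzj)
      exact mem_biUnion (Finset.mem_filter.2 ⟨hjt, hjS⟩) hzj
    · rintro ⟨hzU, hzV⟩
      refine ⟨hzU, ?_⟩
      obtain ⟨j, hjf, hzj⟩ := mem_iUnion₂.1 hzV
      obtain ⟨hjt, hjS⟩ := Finset.mem_filter.1 hjf
      intro hzW
      obtain ⟨x, hxS, hzx⟩ := mem_iUnion₂.1 hzW
      apply hjS
      rw [← hfix, hF]
      exact Finset.mem_filter.2 ⟨hjt, Or.inr ⟨x, hxS, z, hzx, hzj⟩⟩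
  have hUWopen : IsOpen (U \ W) := by
    rw [hUWeq]
    exact hUo.inter (isOpen_biUnion fun _ _ => isOpen_ball)
  -- the function on U
  set φt : (Fin n → ℂ) → ℂ := fun z => if z ∈ W then ((r:ℂ))⁻¹ * ψ z else 0 with hφt
  have hφtd : DifferentiableOn ℂ φt U := by
    intro z hz
    by_cases hzW : z ∈ W
    · apply DifferentiableAt.differentiableWithinAt
      apply DifferentiableAt.congr_of_eventuallyEq ((hψd z (hWX hzW)).const_mul ((r:ℂ))⁻¹)
      exact eventually_of_mem (hWo.mem_nhds hzW) (fun y hy => if_pos hy)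
    · apply DifferentiableAt.differentiableWithinAt
      apply DifferentiableAt.congr_of_eventuallyEq (differentiableAt_const 0)
      exact eventually_of_mem (hUWopen.mem_nhds ⟨hz, hzW⟩) (fun y hy => if_neg hy.2)
  have hrC : ‖((r:ℂ))⁻¹‖ = r⁻¹ := by
    rw [norm_inv, Complex.norm_real, Real.norm_eq_abs, abs_of_pos hr0]
  have hφtm : MapsTo φt U (ball 0 1) := by
    intro z hz
    rw [mem_ball, dist_eq_norm, sub_zero]
    simp only [hφt]
    by_cases hzW : z ∈ W
    · rw [if_pos hzW, norm_mul, hrC]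
      have h1 : ‖ψ z‖ ≤ T := hWbound z hzW
      calc r⁻¹ * ‖ψ z‖ ≤ r⁻¹ * T := by
            apply mul_le_mul_of_nonneg_left h1 (by positivity)
        _ < 1 := by rw [inv_mul_lt_iff₀ hr0]; linarith
    · rw [if_neg hzW]; simp
  -- derivative of ψ at a
  have hφa : HasFDerivAt φ (fderiv ℂ φ a) a :=
    (hφd.differentiableAt (hXo.mem_nhds haX)).hasFDerivAt
  set c : ℂ := (1 - (starRingEnd ℂ) α * α) / (1 - (starRingEnd ℂ) α * α)^2 with hc
  have hαden : 1 - (starRingEnd ℂ) α * α ≠ 0 := moeb_denom_ne hαn hαn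
  have hψder : HasFDerivAt ψ (c • fderiv ℂ φ a) a := by
    have h1 : HasDerivAt (moeb α) c (φ a) := by
      rw [hα] at hαden ⊢
      exact hasDerivAt_moeb α hαden
    exact h1.comp_hasFDerivAt a hφa
  have hcnorm : 1 ≤ ‖c‖ := by
    rw [hc, norm_div, norm_pow, norm_one_sub_conj_mul_self α hαn]
    have h1 : 0 < 1 - ‖α‖^2 := by nlinarith [norm_nonneg α]
    rw [le_div_iff₀ (by positivity)]
    nlinarith
  -- derivative of φt at a
  have hφtder : HasFDerivAt φt (((r:ℂ))⁻¹ • (c • fderiv ℂ φ a)) a := by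
    apply HasFDerivAt.congr_of_eventuallyEq (hψder.const_mul ((r:ℂ))⁻¹)
    exact eventually_of_mem (hWo.mem_nhds haW) (fun y hy => if_pos hy)
  have hmem : ‖fderivWithin ℂ φt U a v‖ ≤ caraMetric U a v :=
    le_csSup hbdd ⟨φt, hφtd, hφtm, rfl⟩
  have hval : ‖fderivWithin ℂ φt U a v‖ = r⁻¹ * (‖c‖ * ‖fderiv ℂ φ a v‖) := by
    rw [fderivWithin_of_isOpen hUo ha, hφtder.fderiv]
    simp only [ContinuousLinearMap.smul_apply, norm_smul, hrC]
  have key : ‖fderiv ℂ φ a v‖ ≤ r * ‖fderivWithin ℂ φt U a v‖ := by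
    rw [hval]
    have h2 : ‖fderiv ℂ φ a v‖ ≤ ‖c‖ * ‖fderiv ℂ φ a v‖ := by
      nlinarith [norm_nonneg (fderiv ℂ φ a v)]
    calc ‖fderiv ℂ φ a v‖ ≤ ‖c‖ * ‖fderiv ℂ φ a v‖ := h2
      _ = r * (r⁻¹ * (‖c‖ * ‖fderiv ℂ φ a v‖)) := by field_simp
  calc ‖fderiv ℂ φ a v‖ ≤ r * ‖fderivWithin ℂ φt U a v‖ := key
    _ ≤ r * caraMetric U a v := mul_le_mul_of_nonneg_left hmem hr0.le
end

section
/- Let M be a closed complex submanifold of ℂᴺ, W ⊇ M an open neighborhood admitting a holomorphic retraction ρ : W → M, X ⊂ M a domain, and U ⊂ X relatively compact. Suppose R > 0 satisfies U ⊂ B(x,R) for all x ∈ U, and r > 0 satisfies B(x,r) ⊂ W and ρ(B(x,r)) ⊂ X for all x ∈ U. Then for every holomorphic φ : Δ → U with φ(0) = a, the map ψ(ζ) = ρ((1 + r/R)(φ(ζ) − φ(0)) + φ(0)) is a well-defined holomorphic map Δ → X with ψ(0) = a and ψ'(0) = (1 + r/R)·φ'(0); consequently F_X(a,v) ≤ (1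 + r/R)⁻¹ · F_U(a,v) for all a ∈ U and v. -/
open Metric Set Filter Topology

/-- Infinitesimal Kobayashi (Royden–Kobayashi) metric of a set `Ω` in a complex normed space:
`F_Ω(x,v) = inf {|λ| : ∃ φ : Δ → Ω holomorphic, φ(0) = x, λ·φ'(0) = v}`. -/
noncomputable def kobMetric {E : Type*} [NormedAddCommGroup E] [NormedSpace ℂ E]
    (Ω : Set E) (x v : E) : ℝ :=
  sInf {r : ℝ | ∃ φ : ℂ → E, DifferentiableOn ℂ φ (ball 0 1) ∧ MapsTo φ (ball 0 1) Ω ∧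
    φ 0 = x ∧ ∃ lam : ℂ, r = ‖lam‖ ∧ lam • fderivWithin ℂ φ (ball 0 1) 0 1 = v}

/-- The key dilation construction: `M` a closed (complex sub)manifold of `ℂᴺ`, `W ⊇ M` an open
neighborhood with a holomorphic retraction `ρ : W → M`, `X ⊂ M` a domain, `U ⊂ X` relatively
compact, `R > 0` with `U ⊂ B(x,R)` for all `x ∈ U`, `r > 0` with `B(x,r) ⊂ W` and
`ρ(B(x,r)) ⊂ X` for all `x ∈ U`. Then for every holomorphic `φ : Δ → U` with `φ(0) = a`, the map
`ψ(ζ) = ρ((1 + r/R)(φ(ζ) − φ(0)) + φ(0))` is a well-defined holomorphic map `Δ → X` with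
`ψ(0) = a` and `ψ'(0) = (1 + r/R)·φ'(0)`; consequently
`F_X(a,v) ≤ (1 + r/R)⁻¹ · F_U(a,v)` for all `a ∈ U` and `v`. -/
theorem kobayashi_dilation {N : ℕ} (M W X U : Set (Fin N → ℂ))
    (hM : IsClosed M) (hWo : IsOpen W) (hMW : M ⊆ W)
    (ρ : (Fin N → ℂ) → (Fin N → ℂ)) (hρ : DifferentiableOn ℂ ρ W)
    (hρM : MapsTo ρ W M) (hret : ∀ x ∈ M, ρ x = x)
    (hXo : IsOpen X) (hXconn : IsPreconnected X) (hXM : X ⊆ M)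
    (hUo : IsOpen U) (hUX : closure U ⊆ X) (hUc : IsCompact (closure U))
    (R : ℝ) (hR : 0 < R) (hRU : ∀ x ∈ U, U ⊆ ball x R)
    (r : ℝ) (hr : 0 < r) (hrW : ∀ x ∈ U, ball x r ⊆ W)
    (hrX : ∀ x ∈ U, ρ '' ball x r ⊆ X) :
    (∀ (a : Fin N → ℂ), ∀ φ : ℂ → (Fin N → ℂ),
      DifferentiableOn ℂ φ (ball 0 1) → MapsTo φ (ball 0 1) U → φ 0 = a →
      (MapsTo (fun ζ => ρ (((1 + r / R : ℝ) : ℂ) • (φ ζ - φ 0) + φ 0)) (ball 0 1) X ∧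
       DifferentiableOn ℂ (fun ζ => ρ (((1 + r / R : ℝ) : ℂ) • (φ ζ - φ 0) + φ 0)) (ball 0 1) ∧
       (fun ζ => ρ (((1 + r / R : ℝ) : ℂ) • (φ ζ - φ 0) + φ 0)) 0 = a ∧
       fderivWithin ℂ (fun ζ => ρ (((1 + r / R : ℝ) : ℂ) • (φ ζ - φ 0) + φ 0)) (ball 0 1) 0 =
         ((1 + r / R : ℝ) : ℂ) • fderivWithin ℂ φ (ball 0 1) 0)) ∧
    ∀ a ∈ U, ∀ v : Fin N → ℂ, kobMetric X a v ≤ (1 + r / R)⁻¹ * kobMetric U a v := by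
  have hUM : U ⊆ M := fun x hx => hXM (hUX (subset_closure hx))
  have hUW : U ⊆ W := fun x hx => hMW (hUM hx)
  have h0 : (0 : ℂ) ∈ ball (0 : ℂ) 1 := mem_ball_self one_pos
  have hcR : (0:ℝ) < 1 + r / R := by positivity
  set c : ℂ := ((1 + r / R : ℝ) : ℂ) with hc
  have hcne : c ≠ 0 := by
    simp only [hc, Ne, Complex.ofReal_eq_zero]; exact ne_of_gt hcR
  -- key part
  have key : ∀ (a : Fin N → ℂ), ∀ φ : ℂ → (Fin N → ℂ),
      DifferentiableOn ℂ φ (ball 0 1) → MapsTo φ (ball 0 1) U → φ 0 = a →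
      (MapsTo (fun ζ => ρ (c • (φ ζ - φ 0) + φ 0)) (ball 0 1) X ∧
       DifferentiableOn ℂ (fun ζ => ρ (c • (φ ζ - φ 0) + φ 0)) (ball 0 1) ∧
       (fun ζ => ρ (c • (φ ζ - φ 0) + φ 0)) 0 = a ∧
       fderivWithin ℂ (fun ζ => ρ (c • (φ ζ - φ 0) + φ 0)) (ball 0 1) 0 =
         c • fderivWithin ℂ φ (ball 0 1) 0) := by
    intro a φ hφd hφm hφ0
    set g : ℂ → (Fin N → ℂ) := fun ζ => c • (φ ζ - φ 0) + φ 0 with hg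
    have hφ0U : φ 0 ∈ U := hφm h0
    -- g ζ ∈ ball (φ ζ) r
    have hgball : ∀ ζ ∈ ball (0:ℂ) 1, g ζ ∈ ball (φ ζ) r := by
      intro ζ hζ
      have hφζU : φ ζ ∈ U := hφm hζ
      have hdist : ‖φ ζ - φ 0‖ < R := by
        have := hRU (φ 0) hφ0U hφζU
        rwa [mem_ball, dist_eq_norm] at this
      have hsub : g ζ - φ ζ = (c - 1) • (φ ζ - φ 0) := by
        simp only [hg]; module
      have hc1 : c - 1 = ((r / R : ℝ) : ℂ) := by
        simp only [hc]; push_cast; ring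
      rw [mem_ball, dist_eq_norm, hsub, hc1, norm_smul, Complex.norm_real,
        Real.norm_eq_abs, abs_of_pos (div_pos hr hR)]
      calc r / R * ‖φ ζ - φ 0‖ < r / R * R :=
            mul_lt_mul_of_pos_left hdist (div_pos hr hR)
        _ = r := div_mul_cancel₀ r (ne_of_gt hR)
    have hgW : MapsTo g (ball (0:ℂ) 1) W := fun ζ hζ => hrW (φ ζ) (hφm hζ) (hgball ζ hζ)
    have hgX : MapsTo (fun ζ => ρ (g ζ)) (ball (0:ℂ) 1) X := fun ζ hζ =>
      hrX (φ ζ) (hφm hζ) ⟨g ζ, hgball ζ hζ, rfl⟩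
    have hgd : DifferentiableOn ℂ g (ball (0:ℂ) 1) :=
      (((hφd.sub (differentiableOn_const _)).const_smul c).add (differentiableOn_const _))
    have hψd : DifferentiableOn ℂ (fun ζ => ρ (g ζ)) (ball (0:ℂ) 1) := hρ.comp hgd hgW
    have hg0 : g 0 = φ 0 := by simp [hg]
    have hψ0 : ρ (g 0) = a := by rw [hg0, hret _ (hUM hφ0U), hφ0]
    refine ⟨hgX, hψd, hψ0, ?_⟩
    -- derivative computation
    have hφa : DifferentiableAt ℂ φ 0 :=
      (hφd 0 h0).differentiableAt (isOpen_ball.mem_nhds h0)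
    have hρa : DifferentiableAt ℂ ρ (φ 0) :=
      (hρ (φ 0) (hUW hφ0U)).differentiableAt (hWo.mem_nhds (hUW hφ0U))
    have hga : HasFDerivAt g (c • fderiv ℂ φ 0) 0 :=
      ((hφa.hasFDerivAt.sub_const (φ 0)).const_smul c).add_const (φ 0)
    have hcomp : (fderiv ℂ ρ (φ 0)).comp (fderiv ℂ φ 0) = fderiv ℂ φ 0 := by
      have heq : (fun ζ => ρ (φ ζ)) =ᶠ[𝓝 (0:ℂ)] φ :=
        eventually_of_mem (isOpen_ball.mem_nhds h0)
          (fun ζ hζ => hret _ (hUM (hφm hζ)))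
      have h1 : fderiv ℂ (ρ ∘ φ) 0 = (fderiv ℂ ρ (φ 0)).comp (fderiv ℂ φ 0) :=
        fderiv_comp 0 hρa hφa
      rw [← h1]; exact heq.fderiv_eq
    have hρa' : HasFDerivAt ρ (fderiv ℂ ρ (φ 0)) (g 0) := hg0 ▸ hρa.hasFDerivAt
    have hψa : HasFDerivAt (fun ζ => ρ (g ζ))
        ((fderiv ℂ ρ (φ 0)).comp (c • fderiv ℂ φ 0)) 0 := hρa'.comp 0 hga
    rw [fderivWithin_of_isOpen isOpen_ball h0, fderivWithin_of_isOpen isOpen_ball h0,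
      hψa.fderiv]
    refine ContinuousLinearMap.ext fun w => ?_
    have h2 : (fderiv ℂ ρ (φ 0)) ((fderiv ℂ φ 0) w) = (fderiv ℂ φ 0) w := by
      rw [← ContinuousLinearMap.comp_apply, hcomp]
    simp only [ContinuousLinearMap.comp_apply, ContinuousLinearMap.smul_apply, map_smul, h2]
  refine ⟨key, ?_⟩
  intro a ha v
  -- nonemptiness of the U-set
  set SU := {t : ℝ | ∃ φ : ℂ → (Fin N → ℂ), DifferentiableOn ℂ φ (ball 0 1) ∧
    MapsTo φ (ball 0 1) U ∧ φ 0 = a ∧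
    ∃ lam : ℂ, t = ‖lam‖ ∧ lam • fderivWithin ℂ φ (ball 0 1) 0 1 = v} with hSU
  set SX := {t : ℝ | ∃ φ : ℂ → (Fin N → ℂ), DifferentiableOn ℂ φ (ball 0 1) ∧
    MapsTo φ (ball 0 1) X ∧ φ 0 = a ∧
    ∃ lam : ℂ, t = ‖lam‖ ∧ lam • fderivWithin ℂ φ (ball 0 1) 0 1 = v} with hSX
  have hSXbdd : BddBelow SX := ⟨0, fun t ht => by
    obtain ⟨φ, -, -, -, lam, rfl, -⟩ := ht; positivity⟩
  have hSUne : SU.Nonempty := by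
    obtain ⟨δ, hδ, hball⟩ := Metric.isOpen_iff.mp hUo a ha
    set ε : ℝ := δ / (2 * (‖v‖ + 1)) with hε
    have hε0 : 0 < ε := by positivity
    set w : Fin N → ℂ := (ε : ℂ) • v with hw
    have hder : ∀ ζ : ℂ, HasDerivAt (fun z : ℂ => a + z • w) w ζ := by
      intro ζ
      simpa using ((hasDerivAt_id ζ).smul_const w).const_add a
    refine ⟨‖((ε : ℂ))⁻¹‖, fun z => a + z • w, fun z hz => (hder z).differentiableAt.differentiableWithinAt,
      ?_, by simp, ((ε : ℂ))⁻¹, rfl, ?_⟩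
    · intro ζ hζ
      apply hball
      rw [mem_ball, dist_eq_norm]
      have h1 : ‖a + ζ • w - a‖ = ‖ζ‖ * (ε * ‖v‖) := by
        simp [hw, norm_smul, abs_of_pos hε0, mul_assoc]
      rw [h1]
      have hζ1 : ‖ζ‖ < 1 := by simpa [dist_eq_norm] using hζ
      have h2 : ε * ‖v‖ < δ := by
        have : ε * (‖v‖ + 1) = δ / 2 := by
          rw [hε, div_mul_eq_mul_div, div_eq_div_iff (by positivity) (by positivity)]; ring
        nlinarith [norm_nonneg v]
      calc ‖ζ‖ * (ε * ‖v‖) ≤ 1 * (ε * ‖v‖) :=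
            mul_le_mul_of_nonneg_right (le_of_lt hζ1) (by positivity)
        _ = ε * ‖v‖ := one_mul _
        _ < δ := h2
    · rw [fderivWithin_of_isOpen isOpen_ball h0, fderiv_apply_one_eq_deriv, (hder 0).deriv, hw,
        smul_smul, inv_mul_cancel₀ (by exact_mod_cast ne_of_gt hε0), one_smul]
  -- main inequality
  show sInf SX ≤ (1 + r / R)⁻¹ * sInf SU
  rw [le_inv_mul_iff₀ hcR]
  apply le_csInf hSUne
  intro t ht
  obtain ⟨φ, hφd, hφm, hφ0, lam, rfl, hlam⟩ := ht
  obtain ⟨hψm, hψd, hψ0, hψ'⟩ := key a φ hφd hφm hφ0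
  have hmem : ‖lam / c‖ ∈ SX := by
    refine ⟨_, hψd, hψm, hψ0, lam / c, rfl, ?_⟩
    rw [hψ']
    have : ((c • fderivWithin ℂ φ (ball 0 1) 0) : ℂ →L[ℂ] (Fin N → ℂ)) 1
        = c • (fderivWithin ℂ φ (ball 0 1) 0 1) := rfl
    rw [this, smul_smul, div_mul_cancel₀ _ hcne, hlam]
  have h3 : sInf SX ≤ ‖lam / c‖ := csInf_le hSXbdd hmem
  have h4 : ‖lam / c‖ = ‖lam‖ / (1 + r / R) := by
    rw [norm_div, hc, Complex.norm_real, Real.norm_eq_abs, abs_of_pos hcR]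
  calc (1 + r / R) * sInf SX ≤ (1 + r / R) * (‖lam‖ / (1 + r / R)) := by
        apply mul_le_mul_of_nonneg_left _ (le_of_lt hcR)
        rw [← h4]; exact h3
    _ = ‖lam‖ := mul_div_cancel₀ _ (ne_of_gt hcR)
end

section
/- Let X be a bounded domain in ℂ (one complex dimension) and U ⋐ X open. Then there exists k < 1 such that for every a ∈ U and v ∈ ℂ, sup{|φ'(a)·v| : φ : X → Δ holomorphic} ≤ k · sup{|ψ'(a)·v| : ψ : U → Δ holomorphic}. -/
open Metric Set Filter Topology ComplexConjugate

namespace CaraOneDim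

lemma norm_sq_eq (z : ℂ) : ‖z‖ ^ 2 = Complex.normSq z := by
  rw [Complex.sq_norm]

lemma norm_conj_mul_lt_one {p q : ℂ} (hp : ‖p‖ < 1) (hq : ‖q‖ < 1) : ‖conj p * q‖ < 1 := by
  rw [norm_mul, RCLike.norm_conj]
  nlinarith [norm_nonneg p, norm_nonneg q]

lemma denom_ne {p q : ℂ} (hp : ‖p‖ < 1) (hq : ‖q‖ < 1) : 1 - conj p * q ≠ 0 := by
  intro h
  have h1 : (1 : ℂ) = conj p * q := by linear_combination h
  have h2 := norm_conj_mul_lt_one hp hq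
  rw [← h1, norm_one] at h2
  exact lt_irrefl _ h2

lemma mob_lt_one {p q : ℂ} (hp : ‖p‖ < 1) (hq : ‖q‖ < 1) :
    ‖q - p‖ < ‖1 - conj p * q‖ := by
  have key : Complex.normSq (1 - conj p * q) - Complex.normSq (q - p)
      = (1 - Complex.normSq p) * (1 - Complex.normSq q) := by
    simp only [Complex.normSq_apply, Complex.sub_re, Complex.sub_im, Complex.mul_re,
      Complex.mul_im, Complex.one_re, Complex.one_im, Complex.conj_re, Complex.conj_im]
    ring
  have hp2 : Complex.normSq p < 1 := by rw [← norm_sq_eq]; nlinarith [norm_nonneg p]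
  have hq2 : Complex.normSq q < 1 := by rw [← norm_sq_eq]; nlinarith [norm_nonneg q]
  have h2 : ‖q - p‖ ^ 2 < ‖1 - conj p * q‖ ^ 2 := by
    rw [norm_sq_eq, norm_sq_eq]
    nlinarith
  exact lt_of_pow_lt_pow_left₀ 2 (norm_nonneg _) h2

lemma key_bound {p q : ℂ} {c t : ℝ} (hc0 : 0 ≤ c) (hc : c < 1) (ht0 : 0 ≤ t) (ht : t < 1)
    (hp : ‖p‖ ≤ c) (hq : ‖q‖ < 1)
    (hm : ‖q - p‖ ≤ t * ‖1 - conj p * q‖) :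
    ‖q‖ ≤ (c + t) / (1 + c * t) := by
  have hp1 : ‖p‖ < 1 := lt_of_le_of_lt hp hc
  have hD : 1 - conj p * q ≠ 0 := denom_ne hp1 hq
  set s : ℂ := (q - p) / (1 - conj p * q) with hs
  have hsn : ‖s‖ ≤ t := by
    rw [hs, norm_div]
    rw [div_le_iff₀ (norm_pos_iff.mpr hD)]
    exact hm
  have hss : s * (1 - conj p * q) = q - p := by
    rw [hs]; exact div_mul_cancel₀ _ hD
  have hq_eq : q * (1 + conj p * s) = p + s := by linear_combination -hss
  have hE : 1 + conj p * s ≠ 0 := by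
    intro h
    have h1 : conj p * s = -1 := by linear_combination h
    have h2 : ‖conj p * s‖ = 1 := by rw [h1, norm_neg, norm_one]
    rw [norm_mul, RCLike.norm_conj] at h2
    nlinarith [norm_nonneg p, norm_nonneg s]
  -- squared main estimate
  set P := ‖p‖ with hP
  set S := ‖s‖ with hS
  have hP0 : 0 ≤ P := norm_nonneg _
  have hS0 : 0 ≤ S := norm_nonneg _
  set x : ℝ := (conj p * s).re with hx
  have hxle : x ≤ P * S := by
    have h1 := Complex.abs_re_le_norm (conj p * s)
    have h2 : ‖conj p * s‖ = P * S := by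
      rw [norm_mul, RCLike.norm_conj]
    nlinarith [abs_nonneg (conj p * s).re, le_abs_self (conj p * s).re]
  have e1 : ‖p + s‖ ^ 2 = P ^ 2 + S ^ 2 + 2 * x := by
    rw [norm_sq_eq, hP, hS, norm_sq_eq p, norm_sq_eq s, hx]
    simp only [Complex.normSq_apply, Complex.add_re, Complex.add_im, Complex.mul_re,
      Complex.mul_im, Complex.conj_re, Complex.conj_im]
    ring
  have e2 : ‖1 + conj p * s‖ ^ 2 = 1 + P ^ 2 * S ^ 2 + 2 * x := by
    rw [norm_sq_eq, hP, hS, norm_sq_eq p, norm_sq_eq s, hx]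
    simp only [Complex.normSq_apply, Complex.add_re, Complex.add_im, Complex.mul_re,
      Complex.mul_im, Complex.conj_re, Complex.conj_im, Complex.one_re, Complex.one_im]
    ring
  -- the quantitative triangle inequality
  have hA : (P + S) * (1 + c * t) ≤ (c + t) * (1 + P * S) := by
    nlinarith [mul_nonneg (sub_nonneg.2 hp) (sub_nonneg.2 (by nlinarith : t * S ≤ 1)),
      mul_nonneg (sub_nonneg.2 hsn) (sub_nonneg.2 (by nlinarith : c * P ≤ 1))]
  have hslope : (c + t) ^ 2 ≤ (1 + c * t) ^ 2 := by
    nlinarith [mul_nonneg (by nlinarith : (0:ℝ) ≤ 1 - c ^ 2) (by nlinarith : (0:ℝ) ≤ 1 - t ^ 2)]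
  have hsq : ‖p + s‖ ^ 2 * (1 + c * t) ^ 2 ≤ (c + t) ^ 2 * ‖1 + conj p * s‖ ^ 2 := by
    rw [e1, e2]
    have h1 : ((P + S) * (1 + c * t)) ^ 2 ≤ ((c + t) * (1 + P * S)) ^ 2 :=
      pow_le_pow_left₀ (by positivity) hA 2
    have h2 : 0 ≤ (P * S - x) * ((1 + c * t) ^ 2 - (c + t) ^ 2) :=
      mul_nonneg (sub_nonneg.2 hxle) (sub_nonneg.2 hslope)
    linarith [h1, h2]
  have hmain : ‖p + s‖ * (1 + c * t) ≤ (c + t) * ‖1 + conj p * s‖ := by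
    have h1 : (0 : ℝ) ≤ (c + t) * ‖1 + conj p * s‖ := by positivity
    have hsq' : (‖p + s‖ * (1 + c * t)) ^ 2 ≤ ((c + t) * ‖1 + conj p * s‖) ^ 2 := by
      rw [mul_pow, mul_pow]; exact hsq
    exact le_of_pow_le_pow_left₀ two_ne_zero h1 hsq'
  -- conclude
  have hqE : ‖q‖ * ‖1 + conj p * s‖ = ‖p + s‖ := by rw [← norm_mul, hq_eq]
  have hEpos : 0 < ‖1 + conj p * s‖ := norm_pos_iff.mpr hE
  rw [le_div_iff₀ (by positivity : (0:ℝ) < 1 + c * t)]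
  rw [← mul_le_mul_iff_left₀ hEpos]
  calc ‖q‖ * (1 + c * t) * ‖1 + conj p * s‖ = ‖p + s‖ * (1 + c * t) := by
        rw [mul_right_comm, hqE]
    _ ≤ (c + t) * ‖1 + conj p * s‖ := hmain

/-! ### Chains of half-radius steps -/

def stp (X : Set ℂ) (z w : ℂ) : Prop := z ∈ X ∧ dist w z ≤ infDist z Xᶜ / 2

def reach (X : Set ℂ) : ℕ → ℂ → ℂ → Prop
  | 0, z, w => z = w ∧ z ∈ X
  | n + 1, z, w => reach X n z w ∨ ∃ u, reach X n z u ∧ stp X u w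

variable {X : Set ℂ}

lemma infDist_pos (hXo : IsOpen X) (hXc : Xᶜ.Nonempty) {z : ℂ} (hz : z ∈ X) :
    0 < infDist z Xᶜ :=
  (hXo.isClosed_compl.notMem_iff_infDist_pos hXc).1 (fun h => h hz)

lemma ball_infDist_subset {z : ℂ} : ball z (infDist z Xᶜ) ⊆ X := by
  intro u hu
  by_contra hc
  have h1 : infDist z Xᶜ ≤ dist z u := infDist_le_dist_of_mem (Set.mem_compl hc)
  rw [mem_ball, dist_comm] at hu
  linarith

lemma stp_mem (hXo : IsOpen X) (hXc : Xᶜ.Nonempty) {z w : ℂ} (h : stp X z w) : w ∈ X := by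
  apply ball_infDist_subset (z := z)
  have := infDist_pos hXo hXc h.1
  exact mem_ball.2 (lt_of_le_of_lt h.2 (by linarith))

lemma reach_right_mem (hXo : IsOpen X) (hXc : Xᶜ.Nonempty) :
    ∀ {n z w}, reach X n z w → w ∈ X := by
  intro n
  induction n with
  | zero => intro z w h; exact h.1 ▸ h.2
  | succ n ih =>
    intro z w h
    rcases h with h | ⟨u, _, hs⟩
    · exact ih h
    · exact stp_mem hXo hXc hs

lemma reach_left_mem : ∀ {n z w}, reach X n z w → z ∈ X := by
  intro n
  induction n with
  | zero => intro z w h; exact h.2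
  | succ n ih =>
    intro z w h
    rcases h with h | ⟨u, hu, _⟩
    · exact ih h
    · exact ih hu

lemma reach_succ {n : ℕ} {z w : ℂ} (h : reach X n z w) : reach X (n + 1) z w := Or.inl h

lemma reach_mono : ∀ {n m : ℕ} {z w : ℂ}, n ≤ m → reach X n z w → reach X m z w := by
  intro n m
  induction m with
  | zero => intro z w h hr; rwa [Nat.le_zero.1 h] at hr
  | succ m ih =>
    intro z w h hr
    rcases Nat.lt_succ_iff_lt_or_eq.1 (Nat.lt_succ_of_le h) with h' | rfl
    · exact reach_succ (ih (Nat.lt_succ_iff.1 h') hr)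
    · exact hr

lemma reach_self {z : ℂ} (hz : z ∈ X) : ∀ n, reach X n z z := by
  intro n
  induction n with
  | zero => exact ⟨rfl, hz⟩
  | succ n ih => exact reach_succ ih

lemma reach_trans : ∀ {m n : ℕ} {z u w : ℂ}, reach X n z u → reach X m u w →
    reach X (n + m) z w := by
  intro m
  induction m with
  | zero => intro n z u w h1 h2; rwa [← h2.1]
  | succ m ih =>
    intro n z u w h1 h2
    rcases h2 with h2 | ⟨v, hv, hs⟩
    · exact reach_succ (ih h1 h2)
    · exact Or.inr ⟨v, ih h1 hv, hs⟩

lemma reach_stp {n : ℕ} {z u w : ℂ} (h : reach X n z u) (hs : stp X u w) :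
    reach X (n + 1) z w := Or.inr ⟨u, h, hs⟩

/-- In an open connected set, any two points are joined by a chain of half-radius steps. -/
lemma reach_exists (hXo : IsOpen X) (hXconn : IsPreconnected X) (hXc : Xᶜ.Nonempty)
    {z w : ℂ} (hz : z ∈ X) (hw : w ∈ X) : ∃ n, reach X n z w := by
  set S : Set ℂ := {w | ∃ n, reach X n z w} with hSdef
  set T : Set ℂ := {w | w ∈ X ∧ ¬∃ n, reach X n z w} with hTdef
  have hSo : IsOpen S := by
    rw [Metric.isOpen_iff]
    rintro u ⟨n, hn⟩
    have huX : u ∈ X := reach_right_mem hXo hXc hn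
    refine ⟨infDist u Xᶜ / 2, by linarith [infDist_pos hXo hXc huX], ?_⟩
    intro u' hu'
    exact ⟨n + 1, reach_stp hn ⟨huX, le_of_lt (mem_ball.1 hu')⟩⟩
  have hTo : IsOpen T := by
    rw [Metric.isOpen_iff]
    rintro u ⟨huX, hun⟩
    have hR := infDist_pos hXo hXc huX
    refine ⟨infDist u Xᶜ / 4, by linarith, ?_⟩
    intro u' hu'
    have hd : dist u' u < infDist u Xᶜ / 4 := mem_ball.1 hu'
    have hu'X : u' ∈ X := ball_infDist_subset (mem_ball.2 (by linarith))
    refine ⟨hu'X, fun ⟨n, hn⟩ => hun ⟨n + 1, reach_stp hn ⟨hu'X, ?_⟩⟩⟩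
    have hlip : infDist u Xᶜ ≤ infDist u' Xᶜ + dist u u' := infDist_le_infDist_add_dist
    rw [dist_comm] at hd
    linarith
  have hdisj : Disjoint S T := by
    rw [Set.disjoint_left]
    rintro u hu ⟨_, hn⟩
    exact hn hu
  have hsub : X ⊆ S ∪ T := by
    intro u hu
    by_cases h : ∃ n, reach X n z u
    · exact Or.inl h
    · exact Or.inr ⟨hu, h⟩
  have hne : (X ∩ S).Nonempty := ⟨z, hz, 0, rfl, hz⟩
  exact hXconn.subset_left_of_subset_union hSo hTo hdisj hsub hne hw

/-- Uniform chain length for pairs of points in a compact subset. -/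
lemma reach_uniform (hXo : IsOpen X) (hXconn : IsPreconnected X) (hXc : Xᶜ.Nonempty)
    {K : Set ℂ} (hK : IsCompact K) (hKX : K ⊆ X) :
    ∃ N, ∀ z ∈ K, ∀ w ∈ K, reach X N z w := by
  rcases K.eq_empty_or_nonempty with rfl | ⟨p, hp⟩
  · exact ⟨0, by simp⟩
  have hpX : p ∈ X := hKX hp
  obtain ⟨t, htK, hcov⟩ := hK.elim_nhds_subcover (fun x => ball x (infDist x Xᶜ / 4))
    (fun x hx => ball_mem_nhds x (by linarith [infDist_pos hXo hXc (hKX hx)]))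
  have hM : ∀ s : Finset ℂ, (∀ x ∈ s, x ∈ K) →
      ∃ M, ∀ x ∈ s, reach X M x p ∧ reach X M p x := by
    intro s
    classical
    induction s using Finset.induction_on with
    | empty => exact fun _ => ⟨0, by simp⟩
    | insert _ _ hx ih =>
      rename_i a s'
      intro hmem
      obtain ⟨M, hMs⟩ := ih (fun x hxs => hmem x (Finset.mem_insert_of_mem hxs))
      have haX : a ∈ X := hKX (hmem a (Finset.mem_insert_self a s'))
      obtain ⟨n1, hn1⟩ := reach_exists hXo hXconn hXc haX hpX
      obtain ⟨n2, hn2⟩ := reach_exists hXo hXconn hXc hpX haX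
      refine ⟨max M (max n1 n2), ?_⟩
      intro x hxmem
      rcases Finset.mem_insert.1 hxmem with rfl | hxs
      · exact ⟨reach_mono (le_max_of_le_right (le_max_left _ _)) hn1,
          reach_mono (le_max_of_le_right (le_max_right _ _)) hn2⟩
      · exact ⟨reach_mono (le_max_left _ _) (hMs x hxs).1,
          reach_mono (le_max_left _ _) (hMs x hxs).2⟩
  obtain ⟨M, hMt⟩ := hM t htK
  refine ⟨1 + M + M + 1, ?_⟩
  intro z hz w hw
  obtain ⟨x, hxt, hzx⟩ := Set.mem_iUnion₂.1 (hcov hz)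
  obtain ⟨y, hyt, hwy⟩ := Set.mem_iUnion₂.1 (hcov hw)
  have hxX : x ∈ X := hKX (htK x hxt)
  have hyX : y ∈ X := hKX (htK y hyt)
  have hzX : z ∈ X := hKX hz
  have hRx := infDist_pos hXo hXc hxX
  have hRy := infDist_pos hXo hXc hyX
  have hdzx : dist z x < infDist x Xᶜ / 4 := mem_ball.1 hzx
  have hs1 : stp X z x := by
    refine ⟨hzX, ?_⟩
    have hlip : infDist x Xᶜ ≤ infDist z Xᶜ + dist x z := infDist_le_infDist_add_dist
    rw [dist_comm] at hdzx
    linarith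
  have hs2 : stp X y w := by
    refine ⟨hyX, ?_⟩
    have : dist w y < infDist y Xᶜ / 4 := mem_ball.1 hwy
    linarith
  have h1 : reach X 1 z x := reach_stp ⟨rfl, hzX⟩ hs1
  have h2 : reach X (1 + M) z p := reach_trans h1 (hMt x hxt).1
  have h3 : reach X (1 + M + M) z y := reach_trans h2 (hMt y hyt).2
  exact reach_stp h3 hs2

/-! ### Schwarz–Pick step and chain bound -/

lemma schwarz_step (hXo : IsOpen X) (hXc : Xᶜ.Nonempty) {ψ : ℂ → ℂ}
    (hd : DifferentiableOn ℂ ψ X) (hm : MapsTo ψ X (ball 0 1))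
    {z w : ℂ} (hs : stp X z w) :
    ‖ψ w - ψ z‖ ≤ 2⁻¹ * ‖1 - conj (ψ z) * ψ w‖ := by
  obtain ⟨hz, hdzw⟩ := hs
  set R := infDist z Xᶜ with hR
  have hR0 : 0 < R := infDist_pos hXo hXc hz
  have hball : ball z R ⊆ X := ball_infDist_subset
  have hpz : ‖ψ z‖ < 1 := mem_ball_zero_iff.1 (hm hz)
  have hnormlt : ∀ u ∈ ball z R, ‖ψ u‖ < 1 := fun u hu => mem_ball_zero_iff.1 (hm (hball hu))
  set g : ℂ → ℂ := fun ζ => (ψ ζ - ψ z) * (1 - conj (ψ z) * ψ ζ)⁻¹ with hg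
  have hgd : DifferentiableOn ℂ g (ball z R) := by
    apply DifferentiableOn.mul
    · exact (hd.mono hball).sub_const _
    · exact DifferentiableOn.inv
        ((differentiableOn_const _).sub ((differentiableOn_const _).mul (hd.mono hball)))
        (fun u hu => denom_ne hpz (hnormlt u hu))
  have hg0 : g z = 0 := by simp [hg]
  have hgm : MapsTo g (ball z R) (ball (g z) 1) := by
    intro u hu
    rw [hg0, mem_ball_zero_iff, hg]
    have hDu : (0:ℝ) < ‖1 - conj (ψ z) * ψ u‖ :=
      norm_pos_iff.mpr (denom_ne hpz (hnormlt u hu))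
    rw [norm_mul, norm_inv, ← div_eq_mul_inv, div_lt_one hDu]
    exact mob_lt_one hpz (hnormlt u hu)
  have hwball : w ∈ ball z R := mem_ball.2 (lt_of_le_of_lt hdzw (by linarith))
  have key := Complex.dist_le_div_mul_dist_of_mapsTo_ball hgd (hgm.mono_right ball_subset_closedBall) hwball
  rw [hg0, dist_zero_right] at key
  have hgw : ‖g w‖ ≤ 2⁻¹ := by
    calc ‖g w‖ ≤ 1 / R * dist w z := key
      _ ≤ 1 / R * (R / 2) := by
          apply mul_le_mul_of_nonneg_left hdzw (by positivity)
      _ = 2⁻¹ := by field_simp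
  have hDw : (1 : ℂ) - conj (ψ z) * ψ w ≠ 0 := denom_ne hpz (hnormlt w hwball)
  have hDw0 : (0:ℝ) < ‖1 - conj (ψ z) * ψ w‖ := norm_pos_iff.mpr hDw
  have : ‖g w‖ = ‖ψ w - ψ z‖ / ‖1 - conj (ψ z) * ψ w‖ := by
    rw [hg, norm_mul, norm_inv, ← div_eq_mul_inv]
  rw [this, div_le_iff₀ hDw0] at hgw
  linarith [hgw]

noncomputable def kseq : ℕ → ℝ
  | 0 => 0
  | n + 1 => (kseq n + 2⁻¹) / (1 + kseq n * 2⁻¹)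

lemma kseq_nonneg : ∀ n, 0 ≤ kseq n := by
  intro n
  induction n with
  | zero => simp [kseq]
  | succ n ih => rw [kseq]; positivity

lemma kseq_lt_one : ∀ n, kseq n < 1 := by
  intro n
  induction n with
  | zero => norm_num [kseq]
  | succ n ih =>
    have h0 := kseq_nonneg n
    rw [kseq, div_lt_one (by linarith)]
    linarith

lemma kseq_le_succ (n : ℕ) : kseq n ≤ kseq (n + 1) := by
  have h0 := kseq_nonneg n
  have h1 := kseq_lt_one n
  rw [kseq, le_div_iff₀ (by positivity)]
  nlinarith

lemma chain_bound (hXo : IsOpen X) (hXc : Xᶜ.Nonempty) {ψ : ℂ → ℂ}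
    (hd : DifferentiableOn ℂ ψ X) (hm : MapsTo ψ X (ball 0 1)) {a : ℂ} (ha0 : ψ a = 0) :
    ∀ n z, reach X n a z → ‖ψ z‖ ≤ kseq n := by
  intro n
  induction n with
  | zero =>
    intro z hz
    rw [← hz.1, ha0, norm_zero]
    exact le_refl _
  | succ n ih =>
    intro z hz
    rcases hz with hz | ⟨u, hu, hs⟩
    · exact le_trans (ih z hz) (kseq_le_succ n)
    · have hcu := ih u hu
      have hqz : ‖ψ z‖ < 1 := mem_ball_zero_iff.1 (hm (stp_mem hXo hXc hs))
      have hstep := schwarz_step hXo hXc hd hm hs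
      have := key_bound (kseq_nonneg n) (kseq_lt_one n) (by norm_num) (by norm_num)
        hcu hqz hstep
      rw [kseq]
      exact this

lemma fderiv_apply_eq (f : ℂ → ℂ) (x v : ℂ) : (fderiv ℂ f x) v = v * deriv f x := by
  calc (fderiv ℂ f x) v = (fderiv ℂ f x) (v • (1 : ℂ)) := by norm_num
    _ = v • ((fderiv ℂ f x) (1 : ℂ)) := (fderiv ℂ f x).map_smul v 1
    _ = v * deriv f x := by rw [fderiv_apply_one_eq_deriv, smul_eq_mul]

end CaraOneDim

open CaraOneDim in
/-- Let `X` be a bounded domain in `ℂ` and `U ⋐ X` open. Then there exists `k < 1` such that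
for every `a ∈ U` and `v ∈ ℂ`,
`sup {|φ'(a)·v| : φ : X → Δ holomorphic} ≤ k · sup {|ψ'(a)·v| : ψ : U → Δ holomorphic}`. -/
theorem caratheodory_metric_contraction_dim_one (X U : Set ℂ)
    (hXo : IsOpen X) (hXconn : IsConnected X) (hXb : Bornology.IsBounded X)
    (hUo : IsOpen U) (hUX : closure U ⊆ X) (hUc : IsCompact (closure U)) :
    ∃ k : ℝ, k < 1 ∧ ∀ a ∈ U, ∀ v : ℂ,
      sSup {r : ℝ | ∃ φ : ℂ → ℂ, DifferentiableOn ℂ φ X ∧ MapsTo φ X (ball 0 1) ∧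
          r = ‖fderivWithin ℂ φ X a v‖}
        ≤ k * sSup {r : ℝ | ∃ ψ : ℂ → ℂ, DifferentiableOn ℂ ψ U ∧ MapsTo ψ U (ball 0 1) ∧
          r = ‖fderivWithin ℂ ψ U a v‖} := by
  rcases U.eq_empty_or_nonempty with rfl | hUne
  · exact ⟨2⁻¹, by norm_num, by simp⟩
  obtain ⟨R0, hR0⟩ := hXb.subset_ball 0
  have hXc : Xᶜ.Nonempty := by
    refine ⟨((|R0| + 1 : ℝ) : ℂ), fun hmem => ?_⟩
    have h1 := hR0 hmem
    rw [mem_ball, dist_zero_right] at h1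
    simp only [Complex.norm_real, Real.norm_eq_abs] at h1
    have h2 : (0:ℝ) ≤ |R0| + 1 := by positivity
    rw [abs_of_nonneg h2] at h1
    have := le_abs_self R0
    linarith
  obtain ⟨N, hN⟩ := reach_uniform hXo hXconn.isPreconnected hXc hUc hUX
  set k : ℝ := (kseq N + 1) / 2 with hk
  have hkN0 := kseq_nonneg N
  have hkN1 := kseq_lt_one N
  have hk0 : 0 < k := by rw [hk]; linarith
  have hk1 : k < 1 := by rw [hk]; linarith
  have hkNk : kseq N < k := by rw [hk]; linarith
  have hknorm : ‖(k : ℂ)‖ = k := by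
    simp only [Complex.norm_real, Real.norm_eq_abs]; exact abs_of_pos hk0
  refine ⟨k, hk1, ?_⟩
  intro a ha v
  have haX : a ∈ X := hUX (subset_closure ha)
  have hUsub : U ⊆ X := fun z hz => hUX (subset_closure hz)
  obtain ⟨ρ, hρ0, hρ⟩ := Metric.isOpen_iff.1 hUo a ha
  have hBdd : BddAbove {r : ℝ | ∃ ψ : ℂ → ℂ, DifferentiableOn ℂ ψ U ∧ MapsTo ψ U (ball 0 1) ∧
      r = ‖fderivWithin ℂ ψ U a v‖} := by
    refine ⟨‖v‖ * (2 / ρ), ?_⟩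
    rintro r ⟨ψ, hψd, hψm, rfl⟩
    rw [fderivWithin_of_isOpen hUo ha, fderiv_apply_eq, norm_mul]
    refine mul_le_mul_of_nonneg_left ?_ (norm_nonneg v)
    have hmaps : MapsTo ψ (ball a ρ) (ball (ψ a) 2) := by
      intro zz hzz
      have h1 : dist (ψ zz) 0 < 1 := mem_ball.1 (hψm (hρ hzz))
      have h2 : dist (ψ a) 0 < 1 := mem_ball.1 (hψm ha)
      refine mem_ball.2 ?_
      calc dist (ψ zz) (ψ a) ≤ dist (ψ zz) 0 + dist 0 (ψ a) := dist_triangle _ _ _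
        _ < 2 := by rw [dist_comm 0]; linarith
    exact Complex.norm_deriv_le_div_of_mapsTo_ball (hψd.mono hρ) (hmaps.mono_right ball_subset_closedBall) hρ0
  have hzero_mem : (‖fderivWithin ℂ (fun _ => (0:ℂ)) U a v‖) ∈
      {r : ℝ | ∃ ψ : ℂ → ℂ, DifferentiableOn ℂ ψ U ∧ MapsTo ψ U (ball 0 1) ∧
        r = ‖fderivWithin ℂ ψ U a v‖} :=
    ⟨fun _ => 0, differentiableOn_const 0, fun z _ => mem_ball_self one_pos, rfl⟩
  have hsupB0 : 0 ≤ sSup {r : ℝ | ∃ ψ : ℂ → ℂ, DifferentiableOn ℂ ψ U ∧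
      MapsTo ψ U (ball 0 1) ∧ r = ‖fderivWithin ℂ ψ U a v‖} :=
    le_trans (norm_nonneg _) (le_csSup hBdd hzero_mem)
  refine Real.sSup_le ?_ (mul_nonneg hk0.le hsupB0)
  rintro r ⟨φ, hφd, hφm, rfl⟩
  set b := φ a with hb
  have hbn : ‖b‖ < 1 := mem_ball_zero_iff.1 (hφm haX)
  have hden : ∀ z ∈ X, (1:ℂ) - conj b * φ z ≠ 0 := fun z hz =>
    denom_ne hbn (mem_ball_zero_iff.1 (hφm hz))
  set ψ0 : ℂ → ℂ := fun z => (φ z - b) * ((1:ℂ) - conj b * φ z)⁻¹ with hψ0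
  have hψ0d : DifferentiableOn ℂ ψ0 X :=
    (hφd.sub_const _).mul (DifferentiableOn.inv ((differentiableOn_const _).sub
      ((differentiableOn_const _).mul hφd)) hden)
  have hψ0m : MapsTo ψ0 X (ball 0 1) := by
    intro z hz
    rw [mem_ball_zero_iff, hψ0]
    have h1 : ‖φ z‖ < 1 := mem_ball_zero_iff.1 (hφm hz)
    have hDz : (0:ℝ) < ‖(1:ℂ) - conj b * φ z‖ := norm_pos_iff.mpr (hden z hz)
    rw [norm_mul, norm_inv, ← div_eq_mul_inv, div_lt_one hDz]
    exact mob_lt_one hbn h1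
  have hψ00 : ψ0 a = 0 := by simp [hψ0, ← hb]
  have hbnd : ∀ z ∈ U, ‖ψ0 z‖ ≤ kseq N := fun z hz =>
    chain_bound hXo hXc hψ0d hψ0m hψ00 N z (hN a (subset_closure ha) z (subset_closure hz))
  set ψ : ℂ → ℂ := fun z => (k : ℂ)⁻¹ * ψ0 z with hψ
  have hψd : DifferentiableOn ℂ ψ U := (hψ0d.mono hUsub).const_mul _
  have hψm : MapsTo ψ U (ball 0 1) := by
    intro z hz
    rw [mem_ball_zero_iff, hψ, norm_mul, norm_inv, hknorm]
    have h1 : k⁻¹ * ‖ψ0 z‖ ≤ k⁻¹ * kseq N :=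
      mul_le_mul_of_nonneg_left (hbnd z hz) (by positivity)
    have h2 : k⁻¹ * kseq N < 1 := by
      rw [← div_eq_inv_mul, div_lt_one hk0]; exact hkNk
    exact lt_of_le_of_lt h1 h2
  have hmem : ‖fderivWithin ℂ ψ U a v‖ ∈
      {r : ℝ | ∃ ψ' : ℂ → ℂ, DifferentiableOn ℂ ψ' U ∧ MapsTo ψ' U (ball 0 1) ∧
        r = ‖fderivWithin ℂ ψ' U a v‖} := ⟨ψ, hψd, hψm, rfl⟩
  have hle := le_csSup hBdd hmem
  -- derivative computations
  have hφa : HasDerivAt φ (deriv φ a) a := (hφd.differentiableAt (hXo.mem_nhds haX)).hasDerivAt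
  have hinv : HasDerivAt (fun z => ((1:ℂ) - conj b * φ z)⁻¹)
      (-(-(conj b * deriv φ a)) / ((1:ℂ) - conj b * φ a) ^ 2) a :=
    HasDerivAt.inv ((hφa.const_mul (conj b)).const_sub 1) (hden a haX)
  have hψ0a : HasDerivAt ψ0 (deriv φ a * ((1:ℂ) - conj b * b)⁻¹) a := by
    have h := (hφa.sub_const b).mul hinv
    rw [hψ0]
    simpa [← hb, sub_self, Pi.mul_def] using h
  have hψa : HasDerivAt ψ ((k:ℂ)⁻¹ * (deriv φ a * ((1:ℂ) - conj b * b)⁻¹)) a := by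
    rw [hψ]; exact hψ0a.const_mul _
  have hd0 : (0:ℝ) < ‖(1:ℂ) - conj b * b‖ := by
    have := hden a haX
    rw [← hb] at this
    exact norm_pos_iff.mpr this
  have hdnorm : ‖(1:ℂ) - conj b * b‖ ≤ 1 := by
    have he : (1:ℂ) - conj b * b = ((1 - Complex.normSq b : ℝ) : ℂ) := by
      rw [mul_comm, Complex.mul_conj]; push_cast; ring
    have hb2 : Complex.normSq b ≤ 1 := by
      rw [← norm_sq_eq]; nlinarith [norm_nonneg b]
    rw [he, Complex.norm_real, Real.norm_eq_abs,
      abs_of_nonneg (by linarith [Complex.normSq_nonneg b])]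
    linarith [Complex.normSq_nonneg b]
  have hI1 : 1 ≤ ‖((1:ℂ) - conj b * b)⁻¹‖ := by
    rw [norm_inv]
    have h1 : ‖(1:ℂ) - conj b * b‖⁻¹ * ‖(1:ℂ) - conj b * b‖ = 1 := inv_mul_cancel₀ hd0.ne'
    nlinarith [inv_nonneg.2 hd0.le]
  have hrψ : ‖fderivWithin ℂ ψ U a v‖
      = ‖v‖ * (k⁻¹ * (‖deriv φ a‖ * ‖((1:ℂ) - conj b * b)⁻¹‖)) := by
    rw [fderivWithin_of_isOpen hUo ha, fderiv_apply_eq, hψa.deriv, norm_mul, norm_mul,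
      norm_mul, norm_inv, hknorm]
  rw [fderivWithin_of_isOpen hXo haX, fderiv_apply_eq, norm_mul]
  calc ‖v‖ * ‖deriv φ a‖ ≤ k * ‖fderivWithin ℂ ψ U a v‖ := by
        rw [hrψ]
        have he : k * (‖v‖ * (k⁻¹ * (‖deriv φ a‖ * ‖((1:ℂ) - conj b * b)⁻¹‖)))
            = (‖v‖ * ‖deriv φ a‖) * ‖((1:ℂ) - conj b * b)⁻¹‖ := by
          rw [show k * (‖v‖ * (k⁻¹ * (‖deriv φ a‖ * ‖((1:ℂ) - conj b * b)⁻¹‖)))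
              = (k * k⁻¹) * (‖v‖ * (‖deriv φ a‖ * ‖((1:ℂ) - conj b * b)⁻¹‖)) from by ring,
            mul_inv_cancel₀ hk0.ne', one_mul, ← mul_assoc]
        rw [he]
        nlinarith [mul_nonneg (norm_nonneg v) (norm_nonneg (deriv φ a)), hI1]
    _ ≤ k * sSup {r : ℝ | ∃ ψ' : ℂ → ℂ, DifferentiableOn ℂ ψ' U ∧ MapsTo ψ' U (ball 0 1) ∧
          r = ‖fderivWithin ℂ ψ' U a v‖} := mul_le_mul_of_nonneg_left hle hk0.le
end
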